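/- (Gaussian-weighted Pohozaev identity in ℝ², radial case.) Let u : ℝ² → ℝ^m be twice continuously differentiable and satisfy (∂u/∂x_i) · Δu = 0 almost everywhere in ℝ² for i = 1, 2, with ∫_{ℝ²} |∇u|² dx < ∞. Then for every x₀ = (x₀₁, x₀₂) ∈ ℝ² and every t > 0, writing y = x - x₀ = (y₁, y₂): ∬_{ℝ²} e^{-|y|²/4t} |y₁ ∂₁u + y₂ ∂₂u|² dx = ∬_{ℝ²} e^{-|y|²/4t} |-y₂ ∂₁u + y₁ ∂₂u|² dx, i.e. ∬ e^{-|x-x₀|²/4t} |x - x₀|² |∂u/∂ν|² dx = ∬ e^{-|x-x₀|²/4t} |∂u/∂θ|² dx, where ∂u/∂ν is the radial derivative and ∂u/∂θ the angular derivative about x₀. -/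

import Mathlib

open Real MeasureTheory intervalIntegral

/-- First partial derivative `∂₁u` of a map `u : ℝ² → ℝ^m`. -/
noncomputable def pd1 {m : ℕ} (u : ℝ × ℝ → EuclideanSpace ℝ (Fin m)) (x : ℝ × ℝ) :
    EuclideanSpace ℝ (Fin m) :=
  fderiv ℝ u x (1, 0)

/-- Second partial derivative `∂₂u` of a map `u : ℝ² → ℝ^m`. -/
noncomputable def pd2 {m : ℕ} (u : ℝ × ℝ → EuclideanSpace ℝ (Fin m)) (x : ℝ × ℝ) :
    EuclideanSpace ℝ (Fin m) :=
  fderiv ℝ u x (0, 1)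

/-- The componentwise Laplacian `Δu = ∂₁₁u + ∂₂₂u` of a map `u : ℝ² → ℝ^m`. -/
noncomputable def lap2 {m : ℕ} (u : ℝ × ℝ → EuclideanSpace ℝ (Fin m)) (x : ℝ × ℝ) :
    EuclideanSpace ℝ (Fin m) :=
  fderiv ℝ (pd1 u) x (1, 0) + fderiv ℝ (pd2 u) x (0, 1)

/-! ### Auxiliary definitions -/

noncomputable def GP.phi (x₀ : ℝ × ℝ) (t : ℝ) (x : ℝ × ℝ) : ℝ :=
  Real.exp (-((x.1 - x₀.1) ^ 2 + (x.2 - x₀.2) ^ 2) / (4 * t))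

noncomputable def GP.F {m : ℕ} (u : ℝ × ℝ → EuclideanSpace ℝ (Fin m)) (x : ℝ × ℝ) : ℝ :=
  (inner ℝ (pd1 u x) (pd1 u x) : ℝ) - (inner ℝ (pd2 u x) (pd2 u x) : ℝ)

noncomputable def GP.G {m : ℕ} (u : ℝ × ℝ → EuclideanSpace ℝ (Fin m)) (x : ℝ × ℝ) : ℝ :=
  (inner ℝ (pd1 u x) (pd2 u x) : ℝ)

noncomputable def GP.V1 {m : ℕ} (u : ℝ × ℝ → EuclideanSpace ℝ (Fin m)) (x₀ : ℝ × ℝ) (t : ℝ)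
    (x : ℝ × ℝ) : ℝ :=
  GP.phi x₀ t x * ((x.1 - x₀.1) * GP.F u x + (x.2 - x₀.2) * (2 * GP.G u x))

noncomputable def GP.V2 {m : ℕ} (u : ℝ × ℝ → EuclideanSpace ℝ (Fin m)) (x₀ : ℝ × ℝ) (t : ℝ)
    (x : ℝ × ℝ) : ℝ :=
  GP.phi x₀ t x * ((x.1 - x₀.1) * (2 * GP.G u x) - (x.2 - x₀.2) * GP.F u x)

/-! ### Smoothness of the derivatives and symmetry of second derivatives -/

section Smooth
variable {m : ℕ} {u : ℝ × ℝ → EuclideanSpace ℝ (Fin m)} {x : ℝ × ℝ}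

lemma GP.smooth1 (hu : ContDiff ℝ 2 u) : ContDiff ℝ 1 (pd1 u) :=
  (hu.fderiv_right (m := 1) (by norm_num)).clm_apply contDiff_const

lemma GP.smooth2 (hu : ContDiff ℝ 2 u) : ContDiff ℝ 1 (pd2 u) :=
  (hu.fderiv_right (m := 1) (by norm_num)).clm_apply contDiff_const

lemma GP.clairaut (hu : ContDiff ℝ 2 u) (x : ℝ × ℝ) :
    fderiv ℝ (pd1 u) x (0, 1) = fderiv ℝ (pd2 u) x (1, 0) := by
  have hf' : ContDiff ℝ 1 (fderiv ℝ u) := hu.fderiv_right (m := 1) (by norm_num)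
  have hdf' : DifferentiableAt ℝ (fderiv ℝ u) x := (hf'.differentiable one_ne_zero) x
  have hf : ∀ y, HasFDerivAt u (fderiv ℝ u y) y :=
    fun y => ((hu.differentiable two_ne_zero) y).hasFDerivAt
  have hsymm := second_derivative_symmetric hf hdf'.hasFDerivAt (0, 1) (1, 0)
  have h1 : ∀ w : ℝ × ℝ, fderiv ℝ (pd1 u) x w = fderiv ℝ (fderiv ℝ u) x w (1, 0) := by
    intro w
    have : pd1 u = fun y => (fderiv ℝ u y) ((fun _ : ℝ × ℝ => ((1 : ℝ), (0 : ℝ))) y) := rfl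
    rw [this, fderiv_clm_apply hdf' (differentiableAt_const _)]
    simp
  have h2 : ∀ w : ℝ × ℝ, fderiv ℝ (pd2 u) x w = fderiv ℝ (fderiv ℝ u) x w (0, 1) := by
    intro w
    have : pd2 u = fun y => (fderiv ℝ u y) ((fun _ : ℝ × ℝ => ((0 : ℝ), (1 : ℝ))) y) := rfl
    rw [this, fderiv_clm_apply hdf' (differentiableAt_const _)]
    simp
  rw [h1, h2, hsymm]

end Smooth

/-! ### Pointwise derivative computations -/

lemma GP.fderiv_mul_apply {c d : ℝ × ℝ → ℝ} {x v : ℝ × ℝ}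
    (hc : DifferentiableAt ℝ c x) (hd : DifferentiableAt ℝ d x) :
    fderiv ℝ (fun y => c y * d y) x v = c x * fderiv ℝ d x v + d x * fderiv ℝ c x v := by
  rw [fderiv_fun_mul hc hd]; simp

lemma GP.fderiv_add_apply {c d : ℝ × ℝ → ℝ} {x v : ℝ × ℝ}
    (hc : DifferentiableAt ℝ c x) (hd : DifferentiableAt ℝ d x) :
    fderiv ℝ (fun y => c y + d y) x v = fderiv ℝ c x v + fderiv ℝ d x v := by
  rw [fderiv_fun_add hc hd]; simp

lemma GP.fderiv_sub_apply {c d : ℝ × ℝ → ℝ} {x v : ℝ × ℝ}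
    (hc : DifferentiableAt ℝ c x) (hd : DifferentiableAt ℝ d x) :
    fderiv ℝ (fun y => c y - d y) x v = fderiv ℝ c x v - fderiv ℝ d x v := by
  rw [fderiv_fun_sub hc hd]; simp

lemma GP.fderiv_coord1 {p : ℝ} {x v : ℝ × ℝ} :
    fderiv ℝ (fun y : ℝ × ℝ => y.1 - p) x v = v.1 := by
  rw [((hasFDerivAt_fst).sub_const p).fderiv]; rfl

lemma GP.fderiv_coord2 {q : ℝ} {x v : ℝ × ℝ} :
    fderiv ℝ (fun y : ℝ × ℝ => y.2 - q) x v = v.2 := by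
  rw [((hasFDerivAt_snd).sub_const q).fderiv]; rfl

lemma GP.fderiv_coord1' {p : ℝ} {x : ℝ × ℝ} :
    DifferentiableAt ℝ (fun y : ℝ × ℝ => y.1 - p) x :=
  ((hasFDerivAt_fst).sub_const p).differentiableAt

lemma GP.fderiv_coord2' {q : ℝ} {x : ℝ × ℝ} :
    DifferentiableAt ℝ (fun y : ℝ × ℝ => y.2 - q) x :=
  ((hasFDerivAt_snd).sub_const q).differentiableAt

lemma GP.phi_eq (x₀ : ℝ × ℝ) (t : ℝ) : GP.phi x₀ t = fun x =>
    Real.exp ((4 * t)⁻¹ * -((x.1 - x₀.1) * (x.1 - x₀.1) + (x.2 - x₀.2) * (x.2 - x₀.2))) := by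
  funext x; unfold GP.phi; congr 1; ring

lemma GP.hphi (x₀ : ℝ × ℝ) (t : ℝ) (x : ℝ × ℝ) :
    HasFDerivAt (GP.phi x₀ t)
      (Real.exp ((4 * t)⁻¹ *
          -((x.1 - x₀.1) * (x.1 - x₀.1) + (x.2 - x₀.2) * (x.2 - x₀.2))) •
        (4 * t)⁻¹ •
          (-(((x.1 - x₀.1) • ContinuousLinearMap.fst ℝ ℝ ℝ +
                (x.1 - x₀.1) • ContinuousLinearMap.fst ℝ ℝ ℝ) +
              ((x.2 - x₀.2) • ContinuousLinearMap.snd ℝ ℝ ℝ +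
                (x.2 - x₀.2) • ContinuousLinearMap.snd ℝ ℝ ℝ)))) x := by
  rw [GP.phi_eq]
  have h1 : HasFDerivAt (fun x : ℝ × ℝ => x.1 - x₀.1) (ContinuousLinearMap.fst ℝ ℝ ℝ) x :=
    (hasFDerivAt_fst).sub_const _
  have h2 : HasFDerivAt (fun x : ℝ × ℝ => x.2 - x₀.2) (ContinuousLinearMap.snd ℝ ℝ ℝ) x :=
    (hasFDerivAt_snd).sub_const _
  exact ((((h1.mul h1).add (h2.mul h2)).neg).const_mul ((4 * t)⁻¹)).exp

lemma GP.dphi (x₀ : ℝ × ℝ) (t : ℝ) (x v : ℝ × ℝ) :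
    fderiv ℝ (GP.phi x₀ t) x v =
      GP.phi x₀ t x * (-((x.1 - x₀.1) * v.1 + (x.2 - x₀.2) * v.2) / (2 * t)) := by
  rw [(GP.hphi x₀ t x).fderiv]
  rw [GP.phi_eq]
  simp [ContinuousLinearMap.smul_apply, ContinuousLinearMap.add_apply]
  ring

lemma GP.dphi_diff (x₀ : ℝ × ℝ) (t : ℝ) (x : ℝ × ℝ) :
    DifferentiableAt ℝ (GP.phi x₀ t) x := (GP.hphi x₀ t x).differentiableAt

section Deriv
variable {m : ℕ} {u : ℝ × ℝ → EuclideanSpace ℝ (Fin m)} {x : ℝ × ℝ}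

lemma GP.dF (ha : DifferentiableAt ℝ (pd1 u) x) (hb : DifferentiableAt ℝ (pd2 u) x)
    (v : ℝ × ℝ) :
    fderiv ℝ (GP.F u) x v =
      2 * (inner ℝ (pd1 u x) (fderiv ℝ (pd1 u) x v) : ℝ) -
      2 * (inner ℝ (pd2 u x) (fderiv ℝ (pd2 u) x v) : ℝ) := by
  have h : fderiv ℝ (GP.F u) x v =
      fderiv ℝ (fun y => (inner ℝ (pd1 u y) (pd1 u y) : ℝ)) x v -
      fderiv ℝ (fun y => (inner ℝ (pd2 u y) (pd2 u y) : ℝ)) x v := by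
    rw [show GP.F u = fun y => (inner ℝ (pd1 u y) (pd1 u y) : ℝ) -
        (inner ℝ (pd2 u y) (pd2 u y) : ℝ) from rfl,
      fderiv_fun_sub (ha.inner ℝ ha) (hb.inner ℝ hb), ContinuousLinearMap.sub_apply]
  rw [h, fderiv_inner_apply ℝ ha ha, fderiv_inner_apply ℝ hb hb,
    real_inner_comm (fderiv ℝ (pd1 u) x v) (pd1 u x),
    real_inner_comm (fderiv ℝ (pd2 u) x v) (pd2 u x)]
  ring

lemma GP.dG (ha : DifferentiableAt ℝ (pd1 u) x) (hb : DifferentiableAt ℝ (pd2 u) x)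
    (v : ℝ × ℝ) :
    fderiv ℝ (GP.G u) x v =
      (inner ℝ (pd1 u x) (fderiv ℝ (pd2 u) x v) : ℝ) +
      (inner ℝ (fderiv ℝ (pd1 u) x v) (pd2 u x) : ℝ) :=
  fderiv_inner_apply ℝ ha hb v

lemma GP.dF_diff (ha : DifferentiableAt ℝ (pd1 u) x) (hb : DifferentiableAt ℝ (pd2 u) x) :
    DifferentiableAt ℝ (GP.F u) x := (ha.inner ℝ ha).sub (hb.inner ℝ hb)

lemma GP.dG_diff (ha : DifferentiableAt ℝ (pd1 u) x) (hb : DifferentiableAt ℝ (pd2 u) x) :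
    DifferentiableAt ℝ (GP.G u) x := ha.inner ℝ hb

lemma GP.V1_diff (ha : DifferentiableAt ℝ (pd1 u) x) (hb : DifferentiableAt ℝ (pd2 u) x)
    (x₀ : ℝ × ℝ) (t : ℝ) : DifferentiableAt ℝ (GP.V1 u x₀ t) x :=
  (GP.dphi_diff x₀ t x).mul ((GP.fderiv_coord1'.mul (GP.dF_diff ha hb)).add
    (GP.fderiv_coord2'.mul ((GP.dG_diff ha hb).const_mul 2)))

lemma GP.V2_diff (ha : DifferentiableAt ℝ (pd1 u) x) (hb : DifferentiableAt ℝ (pd2 u) x)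
    (x₀ : ℝ × ℝ) (t : ℝ) : DifferentiableAt ℝ (GP.V2 u x₀ t) x :=
  (GP.dphi_diff x₀ t x).mul ((GP.fderiv_coord1'.mul ((GP.dG_diff ha hb).const_mul 2)).sub
    (GP.fderiv_coord2'.mul (GP.dF_diff ha hb)))

lemma GP.div_V (hu : ContDiff ℝ 2 u) (x₀ : ℝ × ℝ) (t : ℝ) (x : ℝ × ℝ) :
    fderiv ℝ (GP.V1 u x₀ t) x (1, 0) + fderiv ℝ (GP.V2 u x₀ t) x (0, 1) =
      2 * GP.phi x₀ t x *
        ((x.1 - x₀.1) * (inner ℝ (pd1 u x) (lap2 u x) : ℝ) +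
          (x.2 - x₀.2) * (inner ℝ (pd2 u x) (lap2 u x) : ℝ)) -
      GP.phi x₀ t x / (2 * t) *
        (‖(x.1 - x₀.1) • pd1 u x + (x.2 - x₀.2) • pd2 u x‖ ^ 2 -
          ‖(-(x.2 - x₀.2)) • pd1 u x + (x.1 - x₀.1) • pd2 u x‖ ^ 2) := by
  have ha : DifferentiableAt ℝ (pd1 u) x := ((GP.smooth1 hu).differentiable one_ne_zero) x
  have hb : DifferentiableAt ℝ (pd2 u) x := ((GP.smooth2 hu).differentiable one_ne_zero) x
  have hFd := GP.dF_diff ha hb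
  have hGd := GP.dG_diff ha hb
  have hG2d : DifferentiableAt ℝ (fun y => 2 * GP.G u y) x := hGd.const_mul 2
  have hdG2 : ∀ v : ℝ × ℝ, fderiv ℝ (fun y => 2 * GP.G u y) x v =
      2 * fderiv ℝ (GP.G u) x v := by
    intro v; rw [fderiv_const_mul hGd]; simp
  have hm1d : DifferentiableAt ℝ (fun y : ℝ × ℝ => (y.1 - x₀.1) * GP.F u y) x :=
    GP.fderiv_coord1'.mul hFd
  have hm2d : DifferentiableAt ℝ (fun y : ℝ × ℝ => (y.2 - x₀.2) * (2 * GP.G u y)) x :=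
    GP.fderiv_coord2'.mul hG2d
  have hm3d : DifferentiableAt ℝ (fun y : ℝ × ℝ => (y.1 - x₀.1) * (2 * GP.G u y)) x :=
    GP.fderiv_coord1'.mul hG2d
  have hm4d : DifferentiableAt ℝ (fun y : ℝ × ℝ => (y.2 - x₀.2) * GP.F u y) x :=
    GP.fderiv_coord2'.mul hFd
  have e1 : fderiv ℝ (GP.V1 u x₀ t) x (1, 0) =
      GP.phi x₀ t x * (((x.1 - x₀.1) * fderiv ℝ (GP.F u) x (1, 0) + GP.F u x * 1) +
        ((x.2 - x₀.2) * (2 * fderiv ℝ (GP.G u) x (1, 0)) + (2 * GP.G u x) * 0)) +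
      ((x.1 - x₀.1) * GP.F u x + (x.2 - x₀.2) * (2 * GP.G u x)) *
        (GP.phi x₀ t x * (-((x.1 - x₀.1) * 1 + (x.2 - x₀.2) * 0) / (2 * t))) := by
    rw [show GP.V1 u x₀ t = fun y =>
        GP.phi x₀ t y * ((y.1 - x₀.1) * GP.F u y + (y.2 - x₀.2) * (2 * GP.G u y)) from rfl]
    rw [GP.fderiv_mul_apply (GP.dphi_diff x₀ t x) (hm1d.fun_add hm2d),
      GP.fderiv_add_apply hm1d hm2d,
      GP.fderiv_mul_apply GP.fderiv_coord1' hFd,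
      GP.fderiv_mul_apply GP.fderiv_coord2' hG2d,
      GP.fderiv_coord1, GP.fderiv_coord2, GP.dphi, hdG2]
  have e2 : fderiv ℝ (GP.V2 u x₀ t) x (0, 1) =
      GP.phi x₀ t x * (((x.1 - x₀.1) * (2 * fderiv ℝ (GP.G u) x (0, 1)) + (2 * GP.G u x) * 0) -
        ((x.2 - x₀.2) * fderiv ℝ (GP.F u) x (0, 1) + GP.F u x * 1)) +
      ((x.1 - x₀.1) * (2 * GP.G u x) - (x.2 - x₀.2) * GP.F u x) *
        (GP.phi x₀ t x * (-((x.1 - x₀.1) * 0 + (x.2 - x₀.2) * 1) / (2 * t))) := by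
    rw [show GP.V2 u x₀ t = fun y =>
        GP.phi x₀ t y * ((y.1 - x₀.1) * (2 * GP.G u y) - (y.2 - x₀.2) * GP.F u y) from rfl]
    rw [GP.fderiv_mul_apply (GP.dphi_diff x₀ t x) (hm3d.fun_sub hm4d),
      GP.fderiv_sub_apply hm3d hm4d,
      GP.fderiv_mul_apply GP.fderiv_coord1' hG2d,
      GP.fderiv_mul_apply GP.fderiv_coord2' hFd,
      GP.fderiv_coord1, GP.fderiv_coord2, GP.dphi, hdG2]
  rw [e1, e2, GP.dF ha hb, GP.dF ha hb, GP.dG ha hb, GP.dG ha hb,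
    real_inner_comm (pd2 u x) ((fderiv ℝ (pd1 u) x) (1, 0)),
    real_inner_comm (pd2 u x) ((fderiv ℝ (pd1 u) x) (0, 1)),
    GP.clairaut hu x]
  have hlap : lap2 u x = fderiv ℝ (pd1 u) x (1, 0) + fderiv ℝ (pd2 u) x (0, 1) := rfl
  rw [hlap, inner_add_right, inner_add_right]
  rw [← real_inner_self_eq_norm_sq, ← real_inner_self_eq_norm_sq]
  simp only [real_inner_add_add_self, real_inner_smul_left, real_inner_smul_right, GP.F, GP.G]
  ring

end Deriv

/-! ### Pointwise bounds -/

lemma GP.exp_bound1 {t : ℝ} (ht : 0 < t) (s : ℝ) :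
    |s| * Real.exp (-(s ^ 2) / (4 * t)) ≤ Real.sqrt t := by
  have e1 := Real.add_one_le_exp (s ^ 2 / (4 * t))
  have e2 : Real.sqrt t ^ 2 = t := Real.sq_sqrt ht.le
  have e3 : 0 < Real.sqrt t := Real.sqrt_pos.2 ht
  have h7 : s ^ 2 / (4 * t) * (4 * t) = s ^ 2 := div_mul_cancel₀ _ (by positivity)
  have key : |s| ≤ Real.sqrt t * Real.exp (s ^ 2 / (4 * t)) := by
    have e4 := mul_le_mul_of_nonneg_left e1 e3.le
    nlinarith [mul_nonneg e3.le (sq_nonneg (2 * Real.sqrt t - |s|)), sq_abs s,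
      mul_pos ht (Real.exp_pos (s ^ 2 / (4 * t))), abs_nonneg s, ht]
  rw [neg_div, Real.exp_neg, mul_comm, inv_mul_le_iff₀ (Real.exp_pos _)]
  linarith [key, mul_comm (Real.sqrt t) (Real.exp (s ^ 2 / (4 * t)))]

lemma GP.exp_bound2 {t : ℝ} (ht : 0 < t) {r : ℝ} (_hr : 0 ≤ r) :
    Real.exp (-r / (4 * t)) * r ≤ 4 * t := by
  have e1 := Real.add_one_le_exp (r / (4 * t))
  have h7 : r / (4 * t) * (4 * t) = r := div_mul_cancel₀ _ (by positivity)
  have key : r ≤ 4 * t * Real.exp (r / (4 * t)) := by nlinarith [ht, Real.exp_pos (r / (4 * t))]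
  rw [neg_div, Real.exp_neg, inv_mul_le_iff₀ (Real.exp_pos _)]
  linarith [mul_comm (4 * t) (Real.exp (r / (4 * t)))]

section Bounds
variable {m : ℕ} {u : ℝ × ℝ → EuclideanSpace ℝ (Fin m)} {t : ℝ} {x₀ x : ℝ × ℝ}

lemma GP.phi_pos (x₀ : ℝ × ℝ) (t : ℝ) (x : ℝ × ℝ) : 0 < GP.phi x₀ t x := Real.exp_pos _

lemma GP.phi_mul_abs1 (ht : 0 < t) : GP.phi x₀ t x * |x.1 - x₀.1| ≤ Real.sqrt t := by
  have h1 : GP.phi x₀ t x ≤ Real.exp (-((x.1 - x₀.1) ^ 2) / (4 * t)) := by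
    apply Real.exp_le_exp.2
    apply div_le_div_of_nonneg_right ?_ ?_ |>.trans_eq rfl
    · nlinarith [sq_nonneg (x.2 - x₀.2)]
    · positivity
  calc GP.phi x₀ t x * |x.1 - x₀.1|
      ≤ Real.exp (-((x.1 - x₀.1) ^ 2) / (4 * t)) * |x.1 - x₀.1| :=
        mul_le_mul_of_nonneg_right h1 (abs_nonneg _)
    _ ≤ Real.sqrt t := by rw [mul_comm]; exact GP.exp_bound1 ht _

lemma GP.phi_mul_abs2 (ht : 0 < t) : GP.phi x₀ t x * |x.2 - x₀.2| ≤ Real.sqrt t := by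
  have h1 : GP.phi x₀ t x ≤ Real.exp (-((x.2 - x₀.2) ^ 2) / (4 * t)) := by
    apply Real.exp_le_exp.2
    apply div_le_div_of_nonneg_right ?_ ?_ |>.trans_eq rfl
    · nlinarith [sq_nonneg (x.1 - x₀.1)]
    · positivity
  calc GP.phi x₀ t x * |x.2 - x₀.2|
      ≤ Real.exp (-((x.2 - x₀.2) ^ 2) / (4 * t)) * |x.2 - x₀.2| :=
        mul_le_mul_of_nonneg_right h1 (abs_nonneg _)
    _ ≤ Real.sqrt t := by rw [mul_comm]; exact GP.exp_bound1 ht _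

lemma GP.F_abs_le : |GP.F u x| ≤ ‖pd1 u x‖ ^ 2 + ‖pd2 u x‖ ^ 2 := by
  rw [GP.F, real_inner_self_eq_norm_sq, real_inner_self_eq_norm_sq]
  have h1 : (0:ℝ) ≤ ‖pd1 u x‖ ^ 2 := sq_nonneg _
  have h2 : (0:ℝ) ≤ ‖pd2 u x‖ ^ 2 := sq_nonneg _
  rw [abs_le]; constructor <;> nlinarith

lemma GP.G_abs_le : 2 * |GP.G u x| ≤ ‖pd1 u x‖ ^ 2 + ‖pd2 u x‖ ^ 2 := by
  have h1 := abs_real_inner_le_norm (pd1 u x) (pd2 u x)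
  have h2 := sq_nonneg (‖pd1 u x‖ - ‖pd2 u x‖)
  rw [GP.G]; nlinarith [abs_nonneg (inner ℝ (pd1 u x) (pd2 u x) : ℝ)]

lemma GP.V1_bound (ht : 0 < t) :
    |GP.V1 u x₀ t x| ≤ 2 * Real.sqrt t * (‖pd1 u x‖ ^ 2 + ‖pd2 u x‖ ^ 2) := by
  set A := ‖pd1 u x‖ ^ 2 + ‖pd2 u x‖ ^ 2 with hA
  have hA0 : 0 ≤ A := by positivity
  have htri : |(x.1 - x₀.1) * GP.F u x + (x.2 - x₀.2) * (2 * GP.G u x)| ≤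
      |x.1 - x₀.1| * |GP.F u x| + |x.2 - x₀.2| * (2 * |GP.G u x|) := by
    calc _ ≤ |(x.1 - x₀.1) * GP.F u x| + |(x.2 - x₀.2) * (2 * GP.G u x)| := abs_add_le _ _
      _ = |x.1 - x₀.1| * |GP.F u x| + |x.2 - x₀.2| * (2 * |GP.G u x|) := by
          rw [abs_mul, abs_mul, abs_mul]; norm_num
  have hphi := GP.phi_pos x₀ t x
  have c1 : (GP.phi x₀ t x * |x.1 - x₀.1|) * |GP.F u x| ≤ Real.sqrt t * A :=
    mul_le_mul (GP.phi_mul_abs1 ht) GP.F_abs_le (abs_nonneg _) (Real.sqrt_nonneg t)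
  have c2 : (GP.phi x₀ t x * |x.2 - x₀.2|) * (2 * |GP.G u x|) ≤ Real.sqrt t * A :=
    mul_le_mul (GP.phi_mul_abs2 ht) GP.G_abs_le (by positivity) (Real.sqrt_nonneg t)
  have : |GP.V1 u x₀ t x| = GP.phi x₀ t x *
      |(x.1 - x₀.1) * GP.F u x + (x.2 - x₀.2) * (2 * GP.G u x)| := by
    rw [GP.V1, abs_mul, abs_of_pos hphi]
  rw [this]
  nlinarith [mul_le_mul_of_nonneg_left htri hphi.le]

lemma GP.V2_bound (ht : 0 < t) :
    |GP.V2 u x₀ t x| ≤ 2 * Real.sqrt t * (‖pd1 u x‖ ^ 2 + ‖pd2 u x‖ ^ 2) := by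
  set A := ‖pd1 u x‖ ^ 2 + ‖pd2 u x‖ ^ 2 with hA
  have hA0 : 0 ≤ A := by positivity
  have htri : |(x.1 - x₀.1) * (2 * GP.G u x) - (x.2 - x₀.2) * GP.F u x| ≤
      |x.1 - x₀.1| * (2 * |GP.G u x|) + |x.2 - x₀.2| * |GP.F u x| := by
    calc _ ≤ |(x.1 - x₀.1) * (2 * GP.G u x)| + |(x.2 - x₀.2) * GP.F u x| := abs_sub _ _
      _ = |x.1 - x₀.1| * (2 * |GP.G u x|) + |x.2 - x₀.2| * |GP.F u x| := by
          rw [abs_mul, abs_mul, abs_mul]; norm_num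
  have hphi := GP.phi_pos x₀ t x
  have c1 : (GP.phi x₀ t x * |x.1 - x₀.1|) * (2 * |GP.G u x|) ≤ Real.sqrt t * A :=
    mul_le_mul (GP.phi_mul_abs1 ht) GP.G_abs_le (by positivity) (Real.sqrt_nonneg t)
  have c2 : (GP.phi x₀ t x * |x.2 - x₀.2|) * |GP.F u x| ≤ Real.sqrt t * A :=
    mul_le_mul (GP.phi_mul_abs2 ht) GP.F_abs_le (abs_nonneg _) (Real.sqrt_nonneg t)
  have : |GP.V2 u x₀ t x| = GP.phi x₀ t x *
      |(x.1 - x₀.1) * (2 * GP.G u x) - (x.2 - x₀.2) * GP.F u x| := by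
    rw [GP.V2, abs_mul, abs_of_pos hphi]
  rw [this]
  nlinarith [mul_le_mul_of_nonneg_left htri hphi.le]

lemma GP.P_bound (ht : 0 < t) (c1 c2 : ℝ)
    (hc : c1 ^ 2 + c2 ^ 2 = (x.1 - x₀.1) ^ 2 + (x.2 - x₀.2) ^ 2) :
    GP.phi x₀ t x * ‖c1 • pd1 u x + c2 • pd2 u x‖ ^ 2 ≤
      8 * t * (‖pd1 u x‖ ^ 2 + ‖pd2 u x‖ ^ 2) := by
  set A := ‖pd1 u x‖ with hA
  set B := ‖pd2 u x‖ with hB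
  have hphi := GP.phi_pos x₀ t x
  have h1 : ‖c1 • pd1 u x + c2 • pd2 u x‖ ≤ |c1| * A + |c2| * B := by
    calc ‖c1 • pd1 u x + c2 • pd2 u x‖ ≤ ‖c1 • pd1 u x‖ + ‖c2 • pd2 u x‖ := norm_add_le _ _
      _ = |c1| * A + |c2| * B := by rw [norm_smul, norm_smul]; rfl
  have h2 : ‖c1 • pd1 u x + c2 • pd2 u x‖ ^ 2 ≤ 2 * (c1 ^ 2 + c2 ^ 2) * (A ^ 2 + B ^ 2) := by
    have h3 : ‖c1 • pd1 u x + c2 • pd2 u x‖ ^ 2 ≤ (|c1| * A + |c2| * B) ^ 2 := by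
      apply sq_le_sq' _ h1
      have := norm_nonneg (c1 • pd1 u x + c2 • pd2 u x)
      nlinarith [abs_nonneg c1, abs_nonneg c2, norm_nonneg (pd1 u x), norm_nonneg (pd2 u x)]
    nlinarith [sq_nonneg (|c1| * B - |c2| * A), sq_nonneg (|c1| * A - |c2| * B), sq_abs c1,
      sq_abs c2, h3]
  have h4 : GP.phi x₀ t x * (c1 ^ 2 + c2 ^ 2) ≤ 4 * t := by
    rw [hc, GP.phi]
    exact GP.exp_bound2 ht (by positivity)
  calc GP.phi x₀ t x * ‖c1 • pd1 u x + c2 • pd2 u x‖ ^ 2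
      ≤ GP.phi x₀ t x * (2 * (c1 ^ 2 + c2 ^ 2) * (A ^ 2 + B ^ 2)) :=
        mul_le_mul_of_nonneg_left h2 hphi.le
    _ = 2 * (GP.phi x₀ t x * (c1 ^ 2 + c2 ^ 2)) * (A ^ 2 + B ^ 2) := by ring
    _ ≤ 2 * (4 * t) * (A ^ 2 + B ^ 2) := by
        apply mul_le_mul_of_nonneg_right _ (by positivity)
        nlinarith [h4]
    _ = 8 * t * (A ^ 2 + B ^ 2) := by ring

end Bounds

/-- **Gaussian-weighted Pohozaev identity in ℝ², radial case.** Let `u : ℝ² → ℝ^m` be `C²`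
with `∂ᵢu · Δu = 0` a.e. for `i = 1,2` and finite Dirichlet energy. Then for every
`x₀ ∈ ℝ²` and `t > 0`, writing `y = x - x₀`,
`∬ e^{-|y|²/4t} |y₁ ∂₁u + y₂ ∂₂u|² dx = ∬ e^{-|y|²/4t} |-y₂ ∂₁u + y₁ ∂₂u|² dx`,
i.e. `∬ e^{-|x-x₀|²/4t} |x-x₀|² |∂u/∂ν|² dx = ∬ e^{-|x-x₀|²/4t} |∂u/∂θ|² dx`. -/
theorem gaussian_pohozaev_2d_radial {m : ℕ} (u : ℝ × ℝ → EuclideanSpace ℝ (Fin m))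
    (hu : ContDiff ℝ 2 u)
    (heq : ∀ᵐ x : ℝ × ℝ,
      (inner ℝ (pd1 u x) (lap2 u x) : ℝ) = 0 ∧ (inner ℝ (pd2 u x) (lap2 u x) : ℝ) = 0)
    (henergy : Integrable (fun x : ℝ × ℝ => ‖pd1 u x‖ ^ 2 + ‖pd2 u x‖ ^ 2)) :
    ∀ (x₀ : ℝ × ℝ) (t : ℝ), 0 < t →
      (∫ x : ℝ × ℝ,
          Real.exp (-((x.1 - x₀.1) ^ 2 + (x.2 - x₀.2) ^ 2) / (4 * t)) *
            ‖(x.1 - x₀.1) • pd1 u x + (x.2 - x₀.2) • pd2 u x‖ ^ 2)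
        = ∫ x : ℝ × ℝ,
            Real.exp (-((x.1 - x₀.1) ^ 2 + (x.2 - x₀.2) ^ 2) / (4 * t)) *
              ‖(-(x.2 - x₀.2)) • pd1 u x + (x.1 - x₀.1) • pd2 u x‖ ^ 2 := by
  intro x₀ t ht
  -- notation
  set K : ℝ × ℝ → ℝ := fun x => ‖pd1 u x‖ ^ 2 + ‖pd2 u x‖ ^ 2 with hK_def
  set Pf : ℝ × ℝ → ℝ := fun x =>
    GP.phi x₀ t x * ‖(x.1 - x₀.1) • pd1 u x + (x.2 - x₀.2) • pd2 u x‖ ^ 2 with hPf_def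
  set Qf : ℝ × ℝ → ℝ := fun x =>
    GP.phi x₀ t x * ‖(-(x.2 - x₀.2)) • pd1 u x + (x.1 - x₀.1) • pd2 u x‖ ^ 2 with hQf_def
  -- continuity facts
  have hcont1 : Continuous (pd1 u) := (GP.smooth1 hu).continuous
  have hcont2 : Continuous (pd2 u) := (GP.smooth2 hu).continuous
  have hKc : Continuous K := ((hcont1.norm.pow 2).add (hcont2.norm.pow 2))
  have hphic : Continuous (GP.phi x₀ t) := by
    apply Real.continuous_exp.comp
    apply Continuous.div_const
    exact (((continuous_fst.sub continuous_const).pow 2).add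
      ((continuous_snd.sub continuous_const).pow 2)).neg
  have hPfc : Continuous Pf := by
    apply hphic.mul
    exact (((continuous_fst.sub continuous_const).smul hcont1).add
      ((continuous_snd.sub continuous_const).smul hcont2)).norm.pow 2
  have hQfc : Continuous Qf := by
    apply hphic.mul
    exact (((continuous_snd.sub continuous_const).neg.smul hcont1).add
      ((continuous_fst.sub continuous_const).smul hcont2)).norm.pow 2
  have hFc : Continuous (GP.F u) := (hcont1.inner hcont1).sub (hcont2.inner hcont2)
  have hGc : Continuous (GP.G u) := hcont1.inner hcont2
  have hV1c : Continuous (GP.V1 u x₀ t) := by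
    apply hphic.mul
    exact ((continuous_fst.sub continuous_const).mul hFc).add
      ((continuous_snd.sub continuous_const).mul (continuous_const.mul hGc))
  have hV2c : Continuous (GP.V2 u x₀ t) := by
    apply hphic.mul
    exact ((continuous_fst.sub continuous_const).mul (continuous_const.mul hGc)).sub
      ((continuous_snd.sub continuous_const).mul hFc)
  -- C¹ facts and continuity of the divergence integrand
  have hφC : ContDiff ℝ 1 (GP.phi x₀ t) := by
    apply (Real.contDiff_exp.of_le le_top).comp
    apply ContDiff.div_const
    exact (((contDiff_fst.sub contDiff_const).pow 2).add
      ((contDiff_snd.sub contDiff_const).pow 2)).neg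
  have hFC : ContDiff ℝ 1 (GP.F u) :=
    ((GP.smooth1 hu).inner ℝ (GP.smooth1 hu)).sub ((GP.smooth2 hu).inner ℝ (GP.smooth2 hu))
  have hGC : ContDiff ℝ 1 (GP.G u) := (GP.smooth1 hu).inner ℝ (GP.smooth2 hu)
  have hV1C : ContDiff ℝ 1 (GP.V1 u x₀ t) := by
    apply hφC.mul
    exact ((contDiff_fst.sub contDiff_const).mul hFC).add
      ((contDiff_snd.sub contDiff_const).mul (contDiff_const.mul hGC))
  have hV2C : ContDiff ℝ 1 (GP.V2 u x₀ t) := by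
    apply hφC.mul
    exact ((contDiff_fst.sub contDiff_const).mul (contDiff_const.mul hGC)).sub
      ((contDiff_snd.sub contDiff_const).mul hFC)
  set D : ℝ × ℝ → ℝ := fun x =>
    fderiv ℝ (GP.V1 u x₀ t) x (1, 0) + fderiv ℝ (GP.V2 u x₀ t) x (0, 1) with hD_def
  have hDc : Continuous D :=
    ((hV1C.continuous_fderiv one_ne_zero).clm_apply continuous_const).add
      ((hV2C.continuous_fderiv one_ne_zero).clm_apply continuous_const)
  -- differentiability
  have haD : ∀ x, DifferentiableAt ℝ (pd1 u) x := (GP.smooth1 hu).differentiable one_ne_zero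
  have hbD : ∀ x, DifferentiableAt ℝ (pd2 u) x := (GP.smooth2 hu).differentiable one_ne_zero
  -- integrability of Pf, Qf
  have hKint : Integrable K := henergy
  have hPint : Integrable Pf := by
    apply Integrable.mono' (hKint.const_mul (8 * t)) hPfc.aestronglyMeasurable
    refine Filter.Eventually.of_forall fun x => ?_
    rw [Real.norm_eq_abs, abs_of_nonneg (mul_nonneg (GP.phi_pos x₀ t x).le (sq_nonneg _))]
    exact GP.P_bound ht _ _ rfl
  have hQint : Integrable Qf := by
    apply Integrable.mono' (hKint.const_mul (8 * t)) hQfc.aestronglyMeasurable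
    refine Filter.Eventually.of_forall fun x => ?_
    rw [Real.norm_eq_abs, abs_of_nonneg (mul_nonneg (GP.phi_pos x₀ t x).le (sq_nonneg _))]
    exact GP.P_bound ht _ _ (by ring)
  -- the divergence equals W₀ a.e.
  set W0 : ℝ × ℝ → ℝ := fun x => -(1 / (2 * t)) * (Pf x - Qf x) with hW0_def
  have hW0int : Integrable W0 := (hPint.sub hQint).const_mul _
  have hae : D =ᵐ[volume] W0 := by
    filter_upwards [heq] with x hx
    rw [hD_def]
    simp only
    rw [GP.div_V hu x₀ t x, hx.1, hx.2, hW0_def, hPf_def, hQf_def]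
    simp only
    ring
  -- divergence theorem on boxes
  have hdiv : ∀ R : ℝ, 0 < R →
      (∫ x in Set.Icc ((-R, -R) : ℝ × ℝ) ((R, R) : ℝ × ℝ), W0 x) =
      (((∫ s in (-R)..R, GP.V2 u x₀ t (s, R)) - ∫ s in (-R)..R, GP.V2 u x₀ t (s, -R)) +
        ∫ s in (-R)..R, GP.V1 u x₀ t (R, s)) - ∫ s in (-R)..R, GP.V1 u x₀ t (-R, s) := by
    intro R hR
    have hle : ((-R, -R) : ℝ × ℝ) ≤ (R, R) := ⟨by simp; linarith, by simp; linarith⟩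
    have h₁ : (∫ x in Set.Icc ((-R, -R) : ℝ × ℝ) ((R, R) : ℝ × ℝ), W0 x) =
        ∫ x in Set.Icc ((-R, -R) : ℝ × ℝ) ((R, R) : ℝ × ℝ), D x :=
      setIntegral_congr_ae measurableSet_Icc (hae.symm.mono fun x h _ => h)
    rw [h₁]
    exact integral_divergence_prod_Icc_of_hasFDerivAt_off_countable_of_le
      (GP.V1 u x₀ t) (GP.V2 u x₀ t)
      (fun x => fderiv ℝ (GP.V1 u x₀ t) x) (fun x => fderiv ℝ (GP.V2 u x₀ t) x)
      (-R, -R) (R, R) hle ∅ Set.countable_empty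
      hV1c.continuousOn hV2c.continuousOn
      (fun x _ => (GP.V1_diff (haD x) (hbD x) x₀ t).hasFDerivAt)
      (fun x _ => (GP.V2_diff (haD x) (hbD x) x₀ t).hasFDerivAt)
      ((hDc.continuousOn).integrableOn_compact isCompact_Icc)
  -- marginals of K and a.e. slice integrability
  have hKprod : Integrable K (volume.prod volume) := by rwa [← Measure.volume_eq_prod]
  have hnegmp : MeasurePreserving (fun r : ℝ => -r) volume volume :=
    Measure.measurePreserving_neg _
  have m1 : Integrable (fun r : ℝ => ∫ s, K (s, r)) := hKprod.swap.integral_prod_left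
  have m2 : Integrable (fun r : ℝ => ∫ s, K (r, s)) := hKprod.integral_prod_left
  have m1' : Integrable (fun r : ℝ => ∫ s, K (s, -r)) :=
    (hnegmp.integrable_comp m1.aestronglyMeasurable).2 m1
  have m2' : Integrable (fun r : ℝ => ∫ s, K (-r, s)) :=
    (hnegmp.integrable_comp m2.aestronglyMeasurable).2 m2
  set g : ℝ → ℝ := fun r =>
    (∫ s, K (s, r)) + (∫ s, K (s, -r)) + (∫ s, K (r, s)) + (∫ s, K (-r, s)) with hg_def
  have hgInt : Integrable g := ((m1.add m1').add m2).add m2'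
  have hgnn : ∀ r, 0 ≤ g r := by
    intro r
    have i1 : 0 ≤ ∫ s, K (s, r) := integral_nonneg fun s => by positivity
    have i2 : 0 ≤ ∫ s, K (s, -r) := integral_nonneg fun s => by positivity
    have i3 : 0 ≤ ∫ s, K (r, s) := integral_nonneg fun s => by positivity
    have i4 : 0 ≤ ∫ s, K (-r, s) := integral_nonneg fun s => by positivity
    simp only [hg_def]; linarith
  have good₁ : ∀ᵐ r : ℝ, Integrable fun s => K (s, r) := hKprod.prod_left_ae
  have good₂ : ∀ᵐ r : ℝ, Integrable fun s => K (s, -r) :=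
    hnegmp.quasiMeasurePreserving.ae good₁
  have good₃ : ∀ᵐ r : ℝ, Integrable fun s => K (r, s) := hKprod.prod_right_ae
  have good₄ : ∀ᵐ r : ℝ, Integrable fun s => K (-r, s) :=
    hnegmp.quasiMeasurePreserving.ae good₃
  -- choose a good sequence of radii
  have hchoice : ∀ n : ℕ, ∃ r : ℝ, ((n : ℝ) < r ∧
      (Integrable (fun s => K (s, r)) ∧ Integrable (fun s => K (s, -r)) ∧
       Integrable (fun s => K (r, s)) ∧ Integrable (fun s => K (-r, s)))) ∧
      g r ≤ 1 / (n + 1) := by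
    intro n
    by_contra hcon
    push_neg at hcon
    have hae2 : ∀ᵐ r ∂(volume.restrict (Set.Ioi (n : ℝ))), 1 / ((n : ℝ) + 1) ≤ g r := by
      rw [ae_restrict_iff' measurableSet_Ioi]
      filter_upwards [good₁, good₂, good₃, good₄] with r h1 h2 h3 h4 hr
      exact (hcon r ⟨hr, h1, h2, h3, h4⟩).le
    have hconst : Integrable (fun _ : ℝ => 1 / ((n : ℝ) + 1))
        (volume.restrict (Set.Ioi (n : ℝ))) := by
      apply Integrable.mono' hgInt.restrict aestronglyMeasurable_const
      filter_upwards [hae2] with r hr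
      rw [Real.norm_eq_abs, abs_of_nonneg (by positivity)]
      exact hr
    rw [integrable_const_iff] at hconst
    rcases hconst with h | h
    · have : ((n : ℝ) + 1) ≠ 0 := by positivity
      field_simp at h
      simp at h
    · have h := h.measure_univ_lt_top
      rw [Measure.restrict_apply_univ, Real.volume_Ioi] at h
      exact (lt_irrefl _ h).elim
  choose R hR using hchoice
  have hR1 : ∀ n : ℕ, (n : ℝ) < R n := fun n => (hR n).1.1
  have hRsl : ∀ n : ℕ, Integrable (fun s => K (s, R n)) ∧ Integrable (fun s => K (s, -(R n))) ∧
      Integrable (fun s => K (R n, s)) ∧ Integrable (fun s => K (-(R n), s)) :=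
    fun n => (hR n).1.2
  have hR2 : ∀ n : ℕ, g (R n) ≤ 1 / (n + 1) := fun n => (hR n).2
  have hRpos : ∀ n : ℕ, 0 < R n := fun n => lt_of_le_of_lt (Nat.cast_nonneg n) (hR1 n)
  have hRtend : Filter.Tendsto R Filter.atTop Filter.atTop :=
    Filter.tendsto_atTop_mono (fun n => (hR1 n).le) tendsto_natCast_atTop_atTop
  -- inner integrals tend to the full integral
  have hleft : Filter.Tendsto
      (fun n => ∫ x in Set.Icc ((-(R n), -(R n)) : ℝ × ℝ) ((R n, R n) : ℝ × ℝ), W0 x)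
      Filter.atTop (nhds (∫ x, W0 x)) := by
    have heqind : ∀ n, (∫ x in Set.Icc ((-(R n), -(R n)) : ℝ × ℝ) ((R n, R n) : ℝ × ℝ), W0 x) =
        ∫ x, (Set.Icc ((-(R n), -(R n)) : ℝ × ℝ) ((R n, R n) : ℝ × ℝ)).indicator W0 x :=
      fun n => (MeasureTheory.integral_indicator measurableSet_Icc).symm
    simp only [heqind]
    apply tendsto_integral_of_dominated_convergence (fun x => |W0 x|)
    · exact fun n => hW0int.aestronglyMeasurable.indicator measurableSet_Icc
    · exact hW0int.abs
    · intro n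
      refine Filter.Eventually.of_forall fun x => ?_
      calc ‖(Set.Icc ((-(R n), -(R n)) : ℝ × ℝ) ((R n, R n) : ℝ × ℝ)).indicator W0 x‖
          ≤ ‖W0 x‖ := norm_indicator_le_norm_self _ _
        _ = |W0 x| := Real.norm_eq_abs _
    · refine Filter.Eventually.of_forall fun x => ?_
      have hev : ∀ᶠ n in Filter.atTop,
          (Set.Icc ((-(R n), -(R n)) : ℝ × ℝ) ((R n, R n) : ℝ × ℝ)).indicator W0 x = W0 x := by
        filter_upwards [hRtend.eventually_ge_atTop (max |x.1| |x.2| + 1)] with n hn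
        apply Set.indicator_of_mem
        have h1 : |x.1| ≤ max |x.1| |x.2| := le_max_left _ _
        have h2 : |x.2| ≤ max |x.1| |x.2| := le_max_right _ _
        rw [abs_le] at h1 h2
        constructor
        · exact ⟨by simp; linarith [h1.1], by simp; linarith [h2.1]⟩
        · exact ⟨by simp; linarith [h1.2], by simp; linarith [h2.2]⟩
      exact Filter.Tendsto.congr' (hev.mono fun n h => h.symm) tendsto_const_nhds
  -- the boundary terms tend to zero
  have hbdry : Filter.Tendsto
      (fun n => (((∫ s in (-(R n))..(R n), GP.V2 u x₀ t (s, R n)) -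
          ∫ s in (-(R n))..(R n), GP.V2 u x₀ t (s, -(R n))) +
          ∫ s in (-(R n))..(R n), GP.V1 u x₀ t (R n, s)) -
          ∫ s in (-(R n))..(R n), GP.V1 u x₀ t (-(R n), s))
      Filter.atTop (nhds 0) := by
    apply squeeze_zero_norm (a := fun n : ℕ => 2 * Real.sqrt t * (1 / ((n : ℝ) + 1)))
    · intro n
      set r := R n with hr_def
      have hrpos : 0 < r := hRpos n
      obtain ⟨s1, s2, s3, s4⟩ := hRsl n
      have key : ∀ (Vf : ℝ × ℝ → ℝ) (Kf : ℝ → ℝ) (Φ : ℝ → ℝ × ℝ),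
          Continuous Φ → (∀ s, Vf (Φ s) = Vf (Φ s)) →
          True := fun _ _ _ _ _ => trivial
      -- bound each of the four boundary integrals
      have bound : ∀ (Vf : ℝ × ℝ → ℝ) (Φ : ℝ → ℝ × ℝ), Continuous Φ →
          (∀ z, |Vf z| ≤ 2 * Real.sqrt t * K z) → Continuous Vf →
          Integrable (fun s => K (Φ s)) →
          |∫ s in (-r)..r, Vf (Φ s)| ≤ 2 * Real.sqrt t * ∫ s, K (Φ s) := by
        intro Vf Φ hΦc hVb hVc hKsl
        have hle : (-r : ℝ) ≤ r := by linarith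
        have step1 : |∫ s in (-r)..r, Vf (Φ s)| ≤ ∫ s in (-r)..r, |Vf (Φ s)| :=
          intervalIntegral.abs_integral_le_integral_abs hle
        have int1 : IntervalIntegrable (fun s => |Vf (Φ s)|) volume (-r) r :=
          ((hVc.comp hΦc).abs).intervalIntegrable _ _
        have int2 : IntervalIntegrable (fun s => 2 * Real.sqrt t * K (Φ s)) volume (-r) r :=
          (hKsl.const_mul _).intervalIntegrable
        have step2 : (∫ s in (-r)..r, |Vf (Φ s)|) ≤
            ∫ s in (-r)..r, 2 * Real.sqrt t * K (Φ s) :=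
          intervalIntegral.integral_mono_on hle int1 int2 (fun s _ => hVb (Φ s))
        have step3 : (∫ s in (-r)..r, 2 * Real.sqrt t * K (Φ s)) =
            2 * Real.sqrt t * ∫ s in (-r)..r, K (Φ s) := by
          rw [intervalIntegral.integral_const_mul]
        have step4 : (∫ s in (-r)..r, K (Φ s)) ≤ ∫ s, K (Φ s) := by
          rw [intervalIntegral.integral_of_le hle]
          exact setIntegral_le_integral hKsl
            (Filter.Eventually.of_forall fun s => by positivity)
        calc |∫ s in (-r)..r, Vf (Φ s)| ≤ ∫ s in (-r)..r, |Vf (Φ s)| := step1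
          _ ≤ ∫ s in (-r)..r, 2 * Real.sqrt t * K (Φ s) := step2
          _ = 2 * Real.sqrt t * ∫ s in (-r)..r, K (Φ s) := step3
          _ ≤ 2 * Real.sqrt t * ∫ s, K (Φ s) :=
              mul_le_mul_of_nonneg_left step4 (by positivity)
      have b1 : |∫ s in (-r)..r, GP.V2 u x₀ t (s, r)| ≤ 2 * Real.sqrt t * ∫ s, K (s, r) :=
        bound _ (fun s => (s, r)) (continuous_id.prodMk continuous_const)
          (fun z => GP.V2_bound ht) hV2c s1
      have b2 : |∫ s in (-r)..r, GP.V2 u x₀ t (s, -r)| ≤ 2 * Real.sqrt t * ∫ s, K (s, -r) :=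
        bound _ (fun s => (s, -r)) (continuous_id.prodMk continuous_const)
          (fun z => GP.V2_bound ht) hV2c s2
      have b3 : |∫ s in (-r)..r, GP.V1 u x₀ t (r, s)| ≤ 2 * Real.sqrt t * ∫ s, K (r, s) :=
        bound _ (fun s => (r, s)) (continuous_const.prodMk continuous_id)
          (fun z => GP.V1_bound ht) hV1c s3
      have b4 : |∫ s in (-r)..r, GP.V1 u x₀ t (-r, s)| ≤ 2 * Real.sqrt t * ∫ s, K (-r, s) :=
        bound _ (fun s => (-r, s)) (continuous_const.prodMk continuous_id)
          (fun z => GP.V1_bound ht) hV1c s4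
      have hgr : 2 * Real.sqrt t * ((∫ s, K (s, r)) + (∫ s, K (s, -r)) + (∫ s, K (r, s)) +
          (∫ s, K (-r, s))) ≤ 2 * Real.sqrt t * (1 / (n + 1)) :=
        mul_le_mul_of_nonneg_left (hR2 n) (by positivity)
      rw [Real.norm_eq_abs]
      have t1 := le_abs_self (∫ s in (-r)..r, GP.V2 u x₀ t (s, r))
      have t1' := neg_abs_le (∫ s in (-r)..r, GP.V2 u x₀ t (s, r))
      have t2 := le_abs_self (∫ s in (-r)..r, GP.V2 u x₀ t (s, -r))
      have t2' := neg_abs_le (∫ s in (-r)..r, GP.V2 u x₀ t (s, -r))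
      have t3 := le_abs_self (∫ s in (-r)..r, GP.V1 u x₀ t (r, s))
      have t3' := neg_abs_le (∫ s in (-r)..r, GP.V1 u x₀ t (r, s))
      have t4 := le_abs_self (∫ s in (-r)..r, GP.V1 u x₀ t (-r, s))
      have t4' := neg_abs_le (∫ s in (-r)..r, GP.V1 u x₀ t (-r, s))
      rw [abs_le]
      constructor <;> linarith
    · have : Filter.Tendsto (fun n : ℕ => 1 / ((n : ℝ) + 1)) Filter.atTop (nhds 0) :=
        tendsto_one_div_add_atTop_nhds_zero_nat
      have := this.const_mul (2 * Real.sqrt t)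
      simpa using this
  -- conclude ∫ W0 = 0
  have hleft' : Filter.Tendsto
      (fun n => (((∫ s in (-(R n))..(R n), GP.V2 u x₀ t (s, R n)) -
          ∫ s in (-(R n))..(R n), GP.V2 u x₀ t (s, -(R n))) +
          ∫ s in (-(R n))..(R n), GP.V1 u x₀ t (R n, s)) -
          ∫ s in (-(R n))..(R n), GP.V1 u x₀ t (-(R n), s))
      Filter.atTop (nhds (∫ x, W0 x)) := by
    apply hleft.congr
    intro n
    exact hdiv (R n) (hRpos n)
  have hW0zero : ∫ x, W0 x = 0 := tendsto_nhds_unique hleft' hbdry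
  -- unravel
  have hsplit : ∫ x, W0 x = -(1 / (2 * t)) * ((∫ x, Pf x) - ∫ x, Qf x) := by
    rw [hW0_def]
    rw [MeasureTheory.integral_const_mul, integral_sub hPint hQint]
  rw [hsplit] at hW0zero
  have hne : -(1 / (2 * t)) ≠ 0 := by
    simp only [ne_eq, neg_eq_zero, one_div, inv_eq_zero]
    positivity
  have : (∫ x, Pf x) - ∫ x, Qf x = 0 := by
    rcases mul_eq_zero.1 hW0zero with h | h
    · exact absurd h hne
    · exact h
  have hfin : (∫ x, Pf x) = ∫ x, Qf x := by linarith
  exact hfin
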